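/- Let G be a one-dimensional geometric graph on n vertices with positions x(1) ≤ ⋯ ≤ x(n), adjacency given by |x(i) − x(j)| ≤ ρ. If x(n) − x(1) > 3ρ, then G is r-connected if and only if G is r-robust. -/

import Mathlib

open SimpleGraph

variable {V : Type*}

/-- A set `S` is `r`-reachable if some vertex in `S` has at least `r` neighbors outside `S`. -/
def rReachable (G : SimpleGraph V) (r : ℕ) (S : Set V) : Prop :=
  ∃ i ∈ S, r ≤ ((G.neighborSet i) \ S).ncard

/-- A graph is `r`-robust if for every pair of nonempty disjoint vertex subsets,
at least one is `r`-reachable. -/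
def rRobust (G : SimpleGraph V) (r : ℕ) : Prop :=
  ∀ A B : Set V, A.Nonempty → B.Nonempty → Disjoint A B →
    rReachable G r A ∨ rReachable G r B

/-- A graph is `r`-connected if it has more than `r` vertices and removing any set of
fewer than `r` vertices leaves the graph connected. -/
def rConnected [Fintype V] (G : SimpleGraph V) (r : ℕ) : Prop :=
  r < Fintype.card V ∧ ∀ T : Set V, T.ncard < r → (G.induce Tᶜ).Connected

/-- One-dimensional geometric graph: distinct vertices `i`, `j` are adjacent iff
`|x i - x j| ≤ ρ`. -/
def geomGraph {n : ℕ} (x : Fin n → ℝ) (ρ : ℝ) : SimpleGraph (Fin n) :=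
  SimpleGraph.fromRel fun i j => |x i - x j| ≤ ρ

section Aux

variable {n r : ℕ} {x : Fin (n + 1) → ℝ} {ρ : ℝ}

private lemma geom_adj {i j : Fin (n+1)} :
    (geomGraph x ρ).Adj i j ↔ i ≠ j ∧ |x i - x j| ≤ ρ := by
  constructor
  · rintro ⟨hne, h | h⟩
    · exact ⟨hne, h⟩
    · exact ⟨hne, by rwa [abs_sub_comm]⟩
  · rintro ⟨hne, h⟩; exact ⟨hne, Or.inl h⟩

private lemma adj_of_dist (hP : ∀ a b : Fin (n+1), (b:ℕ) ≤ (a:ℕ) + r → x b - x a ≤ ρ)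
    {i j : Fin (n+1)} (hij : i ≠ j) (h1 : (i:ℕ) ≤ (j:ℕ) + r) (h2 : (j:ℕ) ≤ (i:ℕ) + r) :
    (geomGraph x ρ).Adj i j := by
  rw [geom_adj]
  exact ⟨hij, abs_sub_le_iff.2 ⟨hP j i h1, hP i j h2⟩⟩

private lemma stepUp (hP : ∀ a b : Fin (n+1), (b:ℕ) ≤ (a:ℕ) + r → x b - x a ≤ ρ)
    {S : Set (Fin (n+1))}
    (hnr : ∀ i ∈ S, (((geomGraph x ρ).neighborSet i) \ S).ncard < r)
    {i : Fin (n+1)} (hi : i ∈ S) (h : (i:ℕ) + r ≤ n) :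
    ∃ s ∈ S, (i:ℕ) < (s:ℕ) ∧ (s:ℕ) ≤ (i:ℕ) + r := by
  by_contra hc
  push_neg at hc
  have hW : ((Finset.Ioc i (⟨(i:ℕ)+r, by omega⟩ : Fin (n+1))) : Set (Fin (n+1)))
      ⊆ (geomGraph x ρ).neighborSet i \ S := by
    intro w hw
    simp only [Finset.coe_Ioc, Set.mem_Ioc, Fin.lt_def, Fin.le_def, Fin.val_mk] at hw
    obtain ⟨hw1, hw2⟩ := hw
    refine ⟨?_, fun hwS => by have := hc w hwS hw1; omega⟩
    rw [SimpleGraph.mem_neighborSet]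
    exact adj_of_dist hP (by rw [Fin.ne_iff_vne]; omega) (by omega) (by omega)
  have h1 := Set.ncard_le_ncard hW (Set.toFinite _)
  rw [Set.ncard_coe_finset, Fin.card_Ioc] at h1
  have h2 := hnr i hi
  simp only [Fin.val_mk] at h1
  omega

private lemma stepDown (hP : ∀ a b : Fin (n+1), (b:ℕ) ≤ (a:ℕ) + r → x b - x a ≤ ρ)
    {S : Set (Fin (n+1))}
    (hnr : ∀ i ∈ S, (((geomGraph x ρ).neighborSet i) \ S).ncard < r)
    {i : Fin (n+1)} (hi : i ∈ S) (h : r ≤ (i:ℕ)) :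
    ∃ s ∈ S, (s:ℕ) < (i:ℕ) := by
  by_contra hc
  push_neg at hc
  have hW : ((Finset.Ico (⟨(i:ℕ)-r, by omega⟩ : Fin (n+1)) i) : Set (Fin (n+1)))
      ⊆ (geomGraph x ρ).neighborSet i \ S := by
    intro w hw
    simp only [Finset.coe_Ico, Set.mem_Ico, Fin.lt_def, Fin.le_def, Fin.val_mk] at hw
    obtain ⟨hw1, hw2⟩ := hw
    refine ⟨?_, fun hwS => absurd (hc w hwS) (by omega)⟩
    rw [SimpleGraph.mem_neighborSet]
    exact adj_of_dist hP (by rw [Fin.ne_iff_vne]; omega) (by omega) (by omega)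
  have h1 := Set.ncard_le_ncard hW (Set.toFinite _)
  rw [Set.ncard_coe_finset, Fin.card_Ico] at h1
  have h2 := hnr i hi
  simp only [Fin.val_mk] at h1
  omega

private lemma windowHit (hP : ∀ a b : Fin (n+1), (b:ℕ) ≤ (a:ℕ) + r → x b - x a ≤ ρ)
    (hr1 : 1 ≤ r) {S : Set (Fin (n+1))} (hne : S.Nonempty)
    (hnr : ∀ i ∈ S, (((geomGraph x ρ).neighborSet i) \ S).ncard < r) :
    ∀ t, r - 1 ≤ t → t ≤ n → ∃ s ∈ S, t < (s:ℕ) + r ∧ (s:ℕ) ≤ t := by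
  intro t ht
  induction t, ht using Nat.le_induction with
  | base =>
    intro _
    obtain ⟨m, hmS, hmin⟩ := Set.exists_min_image S (fun s => (s : ℕ)) (Set.toFinite S) hne
    have hmr : (m:ℕ) < r := by
      by_contra h
      push_neg at h
      obtain ⟨s, hsS, hs⟩ := stepDown hP hnr hmS h
      exact absurd (hmin s hsS) (by omega)
    exact ⟨m, hmS, by omega, by omega⟩
  | succ t ht ih =>
    intro htn
    obtain ⟨s, hsS, h1, h2⟩ := ih (by omega)
    by_cases hcase : t + 1 < (s:ℕ) + r
    · exact ⟨s, hsS, hcase, by omega⟩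
    · obtain ⟨s', hs'S, h3, h4⟩ := stepUp hP hnr hsS (by omega)
      exact ⟨s', hs'S, by omega, by omega⟩

private lemma countLemma (hP : ∀ a b : Fin (n+1), (b:ℕ) ≤ (a:ℕ) + r → x b - x a ≤ ρ)
    {S : Set (Fin (n+1))}
    (hnr : ∀ i ∈ S, (((geomGraph x ρ).neighborSet i) \ S).ncard < r)
    {i : Fin (n+1)} (hi : i ∈ S) (h1 : r ≤ (i:ℕ)) (h2 : (i:ℕ) + r ≤ n) :
    r + 2 ≤ (((Finset.Icc (⟨(i:ℕ) - r, by omega⟩ : Fin (n+1)) ⟨(i:ℕ) + r, by omega⟩ : Finset (Fin (n+1))) : Set (Fin (n+1))) ∩ S).ncard := by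
  set W : Set (Fin (n+1)) :=
    ((Finset.Icc (⟨(i:ℕ) - r, by omega⟩ : Fin (n+1)) ⟨(i:ℕ) + r, by omega⟩ : Finset (Fin (n+1))) : Set (Fin (n+1))) with hWdef
  have hWcard : W.ncard = 2*r + 1 := by
    rw [hWdef, Set.ncard_coe_finset, Fin.card_Icc]
    simp only [Fin.val_mk]
    omega
  have hsub : W \ S ⊆ (geomGraph x ρ).neighborSet i \ S := by
    intro w hw
    obtain ⟨hwW, hwS⟩ := hw
    rw [hWdef, Finset.coe_Icc, Set.mem_Icc, Fin.le_def, Fin.le_def] at hwW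
    simp only [Fin.val_mk] at hwW
    obtain ⟨hw1, hw2⟩ := hwW
    refine ⟨?_, hwS⟩
    rw [SimpleGraph.mem_neighborSet]
    exact adj_of_dist hP (fun h => hwS (h ▸ hi)) (by omega) (by omega)
  have hle := Set.ncard_le_ncard hsub (Set.toFinite _)
  have h3 := hnr i hi
  have h4 := Set.ncard_inter_add_ncard_diff_eq_ncard W S (Set.toFinite _)
  omega

private lemma finalCount (u v U1 U2 V1 V2 : Fin (n+1))
    (hU1 : (U1:ℕ) = (u:ℕ) - r) (hU2 : (U2:ℕ) = (u:ℕ) + r)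
    (hV1 : (V1:ℕ) = (v:ℕ) - r) (hV2 : (V2:ℕ) = (v:ℕ) + r)
    (hru : r ≤ (u:ℕ)) (huv : (u:ℕ) < (v:ℕ))
    {A B : Set (Fin (n+1))} (hdisj : Disjoint A B)
    (hgap : ∀ w : Fin (n+1), (u:ℕ) < (w:ℕ) → (w:ℕ) < (v:ℕ) → w ∉ A ∧ w ∉ B)
    (hcA : r + 2 ≤ (((Finset.Icc U1 U2 : Finset (Fin (n+1))) : Set (Fin (n+1))) ∩ A).ncard)
    (hcB : r + 2 ≤ (((Finset.Icc V1 V2 : Finset (Fin (n+1))) : Set (Fin (n+1))) ∩ B).ncard) :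
    False := by
  have hdisjF : Disjoint
      (((Finset.Icc U1 U2 : Finset (Fin (n+1))) : Set (Fin (n+1))) ∩ A)
      (((Finset.Icc V1 V2 : Finset (Fin (n+1))) : Set (Fin (n+1))) ∩ B) := by
    rw [Set.disjoint_left]
    rintro w ⟨-, hwA⟩ ⟨-, hwB⟩
    exact Set.disjoint_left.1 hdisj hwA hwB
  have hsubK : (((Finset.Icc U1 U2 : Finset (Fin (n+1))) : Set (Fin (n+1))) ∩ A)
      ∪ (((Finset.Icc V1 V2 : Finset (Fin (n+1))) : Set (Fin (n+1))) ∩ B)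
      ⊆ ((Finset.Icc U1 u : Finset (Fin (n+1))) : Set (Fin (n+1)))
      ∪ ((Finset.Icc v V2 : Finset (Fin (n+1))) : Set (Fin (n+1))) := by
    rintro w (⟨hwIcc, hwS⟩ | ⟨hwIcc, hwS⟩)
    · rw [Finset.coe_Icc, Set.mem_Icc, Fin.le_def, Fin.le_def] at hwIcc
      rw [Set.mem_union, Finset.coe_Icc, Finset.coe_Icc, Set.mem_Icc, Set.mem_Icc,
        Fin.le_def, Fin.le_def, Fin.le_def, Fin.le_def]
      rcases le_or_gt ((w:ℕ)) ((u:ℕ)) with h | h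
      · exact Or.inl ⟨hwIcc.1, h⟩
      · have hvw : (v:ℕ) ≤ (w:ℕ) := by
          by_contra hc
          exact (hgap w h (not_le.1 hc)).1 hwS
        exact Or.inr ⟨hvw, by omega⟩
    · rw [Finset.coe_Icc, Set.mem_Icc, Fin.le_def, Fin.le_def] at hwIcc
      rw [Set.mem_union, Finset.coe_Icc, Finset.coe_Icc, Set.mem_Icc, Set.mem_Icc,
        Fin.le_def, Fin.le_def, Fin.le_def, Fin.le_def]
      rcases le_or_gt ((v:ℕ)) ((w:ℕ)) with h | h
      · exact Or.inr ⟨h, hwIcc.2⟩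
      · have hwu : (w:ℕ) ≤ (u:ℕ) := by
          by_contra hc
          exact (hgap w (not_le.1 hc) h).2 hwS
        exact Or.inl ⟨by omega, hwu⟩
  have hKcard : (((Finset.Icc U1 u : Finset (Fin (n+1))) : Set (Fin (n+1)))
      ∪ ((Finset.Icc v V2 : Finset (Fin (n+1))) : Set (Fin (n+1)))).ncard ≤ 2*r + 2 := by
    refine le_trans (Set.ncard_union_le _ _) ?_
    rw [Set.ncard_coe_finset, Set.ncard_coe_finset, Fin.card_Icc, Fin.card_Icc]
    omega
  have h5 := Set.ncard_le_ncard hsubK (Set.toFinite _)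
  rw [Set.ncard_union_eq hdisjF (Set.toFinite _) (Set.toFinite _)] at h5
  omega

private lemma core (hP : ∀ a b : Fin (n+1), (b:ℕ) ≤ (a:ℕ) + r → x b - x a ≤ ρ)
    (h3 : 3 * r < n) (hr1 : 1 ≤ r)
    {A B : Set (Fin (n+1))} (hdisj : Disjoint A B)
    (hnrA : ∀ i ∈ A, (((geomGraph x ρ).neighborSet i) \ A).ncard < r)
    (hnrB : ∀ i ∈ B, (((geomGraph x ρ).neighborSet i) \ B).ncard < r)
    {a b : Fin (n+1)} (ha : a ∈ A) (hb : b ∈ B) (hab : a < b)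
    (har : r ≤ (a:ℕ)) (hbr : (b:ℕ) ≤ 2*r - 1) : False := by
  -- v : minimum of B ∩ (a, b]
  obtain ⟨v, hvmem, hvmin'⟩ := Set.exists_min_image {s : Fin (n+1) | s ∈ B ∧ a < s ∧ s ≤ b}
    (fun s => (s:ℕ)) (Set.toFinite _) ⟨b, hb, hab, le_refl _⟩
  obtain ⟨hvB, hav, hvb⟩ := hvmem
  have hvmin : ∀ w ∈ B, a < w → ¬ (w < v) := by
    intro w hw h1 h2
    have := hvmin' w ⟨hw, h1, le_trans h2.le hvb⟩
    rw [Fin.lt_def] at h2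
    omega
  -- u : maximum of (A ∪ B) ∩ [a, v)
  obtain ⟨u, humem, humax'⟩ := Set.exists_max_image
    {s : Fin (n+1) | (s ∈ A ∨ s ∈ B) ∧ a ≤ s ∧ s < v}
    (fun s => (s:ℕ)) (Set.toFinite _) ⟨a, Or.inl ha, le_refl _, hav⟩
  obtain ⟨huAB, hau, huv⟩ := humem
  have huA : u ∈ A := by
    rcases huAB with h | h
    · exact h
    · exfalso
      have hau' : a < u := lt_of_le_of_ne hau (fun he => Set.disjoint_left.1 hdisj ha (he ▸ h))
      exact hvmin u h hau' huv
  have hgap : ∀ w : Fin (n+1), u < w → w < v → w ∉ A ∧ w ∉ B := by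
    intro w h1 h2
    constructor <;> intro hw
    · have := humax' w ⟨Or.inl hw, le_trans hau h1.le, h2⟩
      rw [Fin.lt_def] at h1
      omega
    · have := humax' w ⟨Or.inr hw, le_trans hau h1.le, h2⟩
      rw [Fin.lt_def] at h1
      omega
  -- numeric bounds
  rw [Fin.le_def] at hau
  rw [Fin.lt_def] at huv
  rw [Fin.le_def] at hvb
  have hru : r ≤ (u:ℕ) := le_trans har hau
  have hun : (u:ℕ) + r ≤ n := by omega
  have hrv : r ≤ (v:ℕ) := by omega
  have hvn : (v:ℕ) + r ≤ n := by omega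
  -- counting
  have hcA := countLemma hP hnrA huA hru hun
  have hcB := countLemma hP hnrB hvB hrv hvn
  have hgap' : ∀ w : Fin (n+1), (u:ℕ) < (w:ℕ) → (w:ℕ) < (v:ℕ) → w ∉ A ∧ w ∉ B := by
    intro w h1 h2
    exact hgap w (Fin.lt_def.2 h1) (Fin.lt_def.2 h2)
  exact finalCount u v ⟨(u:ℕ) - r, by omega⟩ ⟨(u:ℕ) + r, by omega⟩
    ⟨(v:ℕ) - r, by omega⟩ ⟨(v:ℕ) + r, by omega⟩ rfl rfl rfl rfl hru huv hdisj hgap' hcA hcB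

private lemma robust_of (hρ : 0 < ρ) (hx : Monotone x)
    (hspread : 3 * ρ < x (Fin.last n) - x 0)
    (hP : ∀ a b : Fin (n+1), (b:ℕ) ≤ (a:ℕ) + r → x b - x a ≤ ρ)
    (hrn : r ≤ n) : rRobust (geomGraph x ρ) r := by
  intro A B hA hB hdisj
  by_contra hc
  push_neg at hc
  obtain ⟨hcA, hcB⟩ := hc
  have hnrA : ∀ i ∈ A, (((geomGraph x ρ).neighborSet i) \ A).ncard < r := by
    intro i hi
    by_contra h
    exact hcA ⟨i, hi, le_of_not_gt h⟩
  have hnrB : ∀ i ∈ B, (((geomGraph x ρ).neighborSet i) \ B).ncard < r := by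
    intro i hi
    by_contra h
    exact hcB ⟨i, hi, le_of_not_gt h⟩
  rcases Nat.eq_zero_or_pos r with hr0 | hr1
  · obtain ⟨i, hi⟩ := hA
    exact hcA ⟨i, hi, hr0 ▸ Nat.zero_le _⟩
  have h3 : 3 * r < n := by
    by_contra h
    push_neg at h
    have e1 : x ⟨r, by omega⟩ - x 0 ≤ ρ := hP 0 ⟨r, by omega⟩ (by simp)
    have e2 : x ⟨min (2*r) n, by omega⟩ - x ⟨r, by omega⟩ ≤ ρ :=
      hP ⟨r, by omega⟩ ⟨min (2*r) n, by omega⟩ (by simp; omega)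
    have e3 : x (Fin.last n) - x ⟨min (2*r) n, by omega⟩ ≤ ρ :=
      hP ⟨min (2*r) n, by omega⟩ (Fin.last n) (by simp [Fin.last]; omega)
    linarith
  obtain ⟨a, haA, ha1, ha2⟩ := windowHit hP hr1 hA hnrA (2*r - 1) (by omega) (by omega)
  obtain ⟨b, hbB, hb1, hb2⟩ := windowHit hP hr1 hB hnrB (2*r - 1) (by omega) (by omega)
  have hne : a ≠ b := by
    intro h
    exact Set.disjoint_left.1 hdisj haA (h ▸ hbB)
  rcases lt_or_gt_of_ne hne with h | h
  · exact core hP h3 hr1 hdisj hnrA hnrB haA hbB h (by omega) hb2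
  · exact core hP h3 hr1 hdisj.symm hnrB hnrA hbB haA h (by omega) ha2

private lemma P_of_connected (hρ : 0 < ρ) (hx : Monotone x)
    (hconn : rConnected (geomGraph x ρ) r) :
    ∀ a b : Fin (n+1), (b:ℕ) ≤ (a:ℕ) + r → x b - x a ≤ ρ := by
  intro a b hba
  by_contra hgt
  push_neg at hgt
  have hab : (a:ℕ) < (b:ℕ) := by
    by_contra h
    push_neg at h
    have := hx (show b ≤ a from Fin.le_def.2 h)
    linarith
  set T : Set (Fin (n+1)) := ↑(Finset.Ioo a b) with hTdef
  have hT : T.ncard < r := by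
    rw [hTdef, Set.ncard_coe_finset, Fin.card_Ioo]
    omega
  have hc := hconn.2 T hT
  have haT : a ∈ Tᶜ := by
    simp [hTdef, Finset.mem_Ioo]
  have hbT : b ∈ Tᶜ := by
    simp [hTdef, Finset.mem_Ioo]
  have hreach := hc.preconnected ⟨a, haT⟩ ⟨b, hbT⟩
  have key : ∀ (c d : ↥(Tᶜ)) (w : ((geomGraph x ρ).induce Tᶜ).Walk c d),
      x c.val ≤ x a → x d.val ≤ x a := by
    intro c d w
    induction w with
    | nil => exact id
    | @cons c' e' d' h p ih =>
      intro hc'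
      apply ih
      have hadj : (geomGraph x ρ).Adj c'.val e'.val := h
      rw [geom_adj] at hadj
      obtain ⟨hne', habs⟩ := hadj
      rcases le_or_gt ((b:ℕ)) ((e'.val : ℕ)) with hge | hlt
      · exfalso
        have h1 : x b ≤ x e'.val := hx (Fin.le_def.2 hge)
        rw [abs_sub_le_iff] at habs
        linarith [habs.2]
      · have he'T : ¬(a < e'.val ∧ e'.val < b) := by
          have := e'.prop
          rw [Set.mem_compl_iff] at this
          simpa [hTdef, Finset.mem_Ioo] using this
        have hle : (e'.val : ℕ) ≤ (a:ℕ) := by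
          rcases not_and_or.1 he'T with h1 | h1
          · rw [Fin.lt_def] at h1
            omega
          · exact absurd (Fin.lt_def.2 hlt) h1
        exact hx (Fin.le_def.2 hle)
  obtain ⟨w⟩ := hreach
  have := key _ _ w (le_refl _)
  simp only at this
  linarith

private lemma ncard_nbhd_le (i : Fin (n+1)) {S : Set (Fin (n+1))} (hi : i ∈ S) :
    ((geomGraph x ρ).neighborSet i \ S).ncard ≤ n := by
  have hsub : (geomGraph x ρ).neighborSet i \ S ⊆ ({i}ᶜ : Set (Fin (n+1))) := by
    rintro w ⟨hw, -⟩
    rw [SimpleGraph.mem_neighborSet] at hw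
    simpa using hw.ne'
  have he : ({i}ᶜ : Set (Fin (n+1))) = ↑((Finset.univ : Finset (Fin (n+1))).erase i) := by
    ext w
    simp
  have h2 := Set.ncard_le_ncard hsub (Set.toFinite _)
  rw [he, Set.ncard_coe_finset, Finset.card_erase_of_mem (Finset.mem_univ _),
    Finset.card_univ, Fintype.card_fin] at h2
  omega

private lemma connected_of_robust (hρ : 0 < ρ) (hx : Monotone x)
    (hspread : 3 * ρ < x (Fin.last n) - x 0)
    (hrob : rRobust (geomGraph x ρ) r) : rConnected (geomGraph x ρ) r := by
  have hn1 : 1 ≤ n := by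
    by_contra h
    push_neg at h
    interval_cases n
    · have : Fin.last 0 = 0 := rfl
      rw [this] at hspread
      simp at hspread
      linarith
  have hrn : r ≤ n := by
    rcases Nat.eq_zero_or_pos r with h0 | h1
    · omega
    have hd := hrob {0} {Fin.last n} ⟨0, rfl⟩ ⟨Fin.last n, rfl⟩ (by
      rw [Set.disjoint_singleton]
      intro h
      have := congrArg Fin.val h
      simp [Fin.last] at this
      omega)
    rcases hd with ⟨i, hi, hcard⟩ | ⟨i, hi, hcard⟩
    · exact le_trans hcard (ncard_nbhd_le i hi)
    · exact le_trans hcard (ncard_nbhd_le i hi)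
  constructor
  · rw [Fintype.card_fin]
    omega
  intro T hT
  by_contra hnc
  have hTne : (Tᶜ : Set (Fin (n+1))).Nonempty := by
    rw [Set.nonempty_compl]
    intro h
    rw [h, Set.ncard_univ, Nat.card_eq_fintype_card, Fintype.card_fin] at hT
    omega
  have hne : Nonempty ↥(Tᶜ) := hTne.to_subtype
  have hnp : ¬ ((geomGraph x ρ).induce Tᶜ).Preconnected := by
    intro hp
    exact hnc ((connected_iff _).2 ⟨hp, hne⟩)
  rw [Preconnected] at hnp
  push_neg at hnp
  obtain ⟨cu, cv, hcr⟩ := hnp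
  set A : Set (Fin (n+1)) :=
    {w | ∃ h : w ∈ Tᶜ, ((geomGraph x ρ).induce Tᶜ).Reachable cu ⟨w, h⟩} with hAdef
  have hAne : A.Nonempty := ⟨cu.val, cu.prop, by rw [Subtype.coe_eta]⟩
  have hBne : (Tᶜ \ A : Set (Fin (n+1))).Nonempty := by
    refine ⟨cv.val, cv.prop, ?_⟩
    rintro ⟨h, hr2⟩
    rw [Subtype.coe_eta] at hr2
    exact hcr hr2
  have hdisj : Disjoint A (Tᶜ \ A) := Set.disjoint_sdiff_right
  rcases hrob A (Tᶜ \ A) hAne hBne hdisj with ⟨i, hiA, hcard⟩ | ⟨i, hiB, hcard⟩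
  · obtain ⟨hiT, hreach⟩ := hiA
    have hsubT : (geomGraph x ρ).neighborSet i \ A ⊆ T := by
      rintro w ⟨hw, hwA⟩
      by_contra hwT
      rw [SimpleGraph.mem_neighborSet] at hw
      refine hwA ⟨hwT, hreach.trans (SimpleGraph.Adj.reachable ?_)⟩
      exact hw
    have := Set.ncard_le_ncard hsubT (Set.toFinite _)
    omega
  · obtain ⟨hiT, hiA⟩ := hiB
    have hsubT : (geomGraph x ρ).neighborSet i \ (Tᶜ \ A) ⊆ T := by
      rintro w ⟨hw, hwB⟩
      by_contra hwT
      rw [SimpleGraph.mem_neighborSet] at hw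
      have hwA : w ∈ A := by
        by_contra hwA
        exact hwB ⟨hwT, hwA⟩
      obtain ⟨hwT', hreachw⟩ := hwA
      refine hiA ⟨hiT, hreachw.trans (SimpleGraph.Adj.reachable ?_)⟩
      exact hw.symm
    have := Set.ncard_le_ncard hsubT (Set.toFinite _)
    omega

end Aux

theorem stmt12 (n : ℕ) (x : Fin (n + 1) → ℝ) (ρ : ℝ) (hρ : 0 < ρ)
    (hx : Monotone x) (hspread : 3 * ρ < x (Fin.last n) - x 0) (r : ℕ) :
    rConnected (geomGraph x ρ) r ↔ rRobust (geomGraph x ρ) r := by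
  constructor
  · intro hc
    have hP := P_of_connected hρ hx hc
    have hrn : r ≤ n := by
      have := hc.1
      rw [Fintype.card_fin] at this
      omega
    exact robust_of hρ hx hspread hP hrn
  · exact connected_of_robust hρ hx hspread
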